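/- Let E ⊆ ℝ^r be a compact domain, f : E → ℝ^m a function, and (E_α) the sequence of f-removed sets on E. If x ∈ E_α for some ordinal α, then for every ordinal β < α the point x is an accumulation point of E_β, i.e. x lies in the closure of E_β \ {x}. -/

import Mathlib

/-- If `x` belongs to the `α`-th set of the sequence of `f`-removed sets on a compact
domain `E`, then `x` is an accumulation point of `E_β` for every `β < α`. -/
theorem stmt_4 {r m : ℕ} (E : Set (EuclideanSpace ℝ (Fin r)))
    (hE : IsCompact E ∧ IsConnected E)
    (f : EuclideanSpace ℝ (Fin r) → EuclideanSpace ℝ (Fin m))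
    (Es : Ordinal → Set (EuclideanSpace ℝ (Fin r)))
    (h0 : Es 0 = E)
    (hsucc : ∀ α : Ordinal, Es (α + 1) = {x ∈ Es α | ¬ ContinuousWithinAt f (Es α) x})
    (hlim : ∀ α : Ordinal, Order.IsSuccLimit α → Es α = ⋂ β ∈ Set.Iio α, Es β)
    (α : Ordinal) (x : EuclideanSpace ℝ (Fin r)) (hx : x ∈ Es α) :
    ∀ β < α, x ∈ closure (Es β \ {x}) := by
  -- antitonicity
  have anti : ∀ δ : Ordinal, ∀ γ ≤ δ, Es δ ⊆ Es γ := by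
    intro δ
    induction δ using Ordinal.induction with
    | h δ IH =>
      intro γ hγ
      rcases eq_or_lt_of_le hγ with rfl | hlt
      · exact subset_rfl
      rcases Ordinal.zero_or_succ_or_isSuccLimit δ with rfl | ⟨a, rfl⟩ | hδ
      · exact absurd hlt (not_lt_of_ge (zero_le (a := γ)))
      · have h1 : Es (Order.succ a) ⊆ Es a := by
          rw [← Ordinal.add_one_eq_succ, hsucc a]
          exact Set.sep_subset _ _
        exact h1.trans (IH a (Order.lt_succ a) γ (Order.lt_succ_iff.mp hlt))
      · rw [hlim δ hδ]
        exact Set.biInter_subset_of_mem hlt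
  intro β hβ
  have hx1 : x ∈ Es (β + 1) := anti α (β + 1) ((Order.add_one_le_iff.mpr hβ)) hx
  rw [hsucc β] at hx1
  by_contra hcl
  exact hx1.2 (continuousWithinAt_diff_self.mp
    (continuousWithinAt_of_notMem_closure hcl))
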